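/- Let a 2-CS-PIP instance be given and let P := { x : E → ℝ : 0 ≤ x_e ≤ 1 for all e ∈ E, and Σ_{e ∈ δ(u)} d^e_u x_e ≤ b_u for all u ∈ V } be the polytope of fractional solutions. Let x̂ be an extreme point of P (a point of P that is not a proper convex combination of two distinct points of P) and let F := { e ∈ E : 0 < x̂_e < 1 }. Then: (i) every connected component C of the graph (V, F) has at most |V(C)| edges (equivalently, contains at most one cycle); and (ii) if 0 < x̂_e < 1 for every e ∈ E, then every vertex incident to an edge of E has degree exactly 2 in G, i.e., the support of x̂ induces vertex-disjoint cycles. -/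

import Mathlib

open Finset

private lemma exists_eps {ι : Type*} [Fintype ι] (t s : ι → ℝ)
    (h0 : ∀ i, 0 ≤ s i) (h1 : ∀ i, t i ≠ 0 → 0 < s i) :
    ∃ ε : ℝ, 0 < ε ∧ ∀ i, ε * |t i| ≤ s i := by
  classical
  rcases isEmpty_or_nonempty ι with hι | hι
  · exact ⟨1, one_pos, fun i => isEmptyElim i⟩
  · set f : ι → ℝ := fun i => if t i = 0 then 1 else s i / |t i| with hf
    have hfpos : ∀ i, 0 < f i := by
      intro i; by_cases h : t i = 0
      · simp [hf, h]
      · simp only [hf, if_neg h]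
        exact div_pos (h1 i h) (abs_pos.mpr h)
    refine ⟨Finset.univ.inf' Finset.univ_nonempty f, ?_, ?_⟩
    · exact (Finset.lt_inf'_iff _).mpr fun i _ => hfpos i
    · intro i
      have hle : Finset.univ.inf' Finset.univ_nonempty f ≤ f i :=
        Finset.inf'_le _ (Finset.mem_univ i)
      by_cases h : t i = 0
      · simp [h, h0 i]
      · have hfi : f i = s i / |t i| := by simp [hf, h]
        calc Finset.univ.inf' Finset.univ_nonempty f * |t i| ≤ f i * |t i| :=
              mul_le_mul_of_nonneg_right hle (abs_nonneg _)
          _ = s i := by rw [hfi, div_mul_cancel₀]; exact ne_of_gt (abs_pos.mpr h)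

private lemma card_le_of_inj {α β : Type*} [Fintype α] [Fintype β]
    (L : (α → ℝ) →ₗ[ℝ] (β → ℝ)) (h : Function.Injective L) :
    Fintype.card α ≤ Fintype.card β := by
  have := LinearMap.finrank_le_finrank_of_injective h
  rwa [Module.finrank_pi, Module.finrank_pi] at this

private lemma key_perturb {V : Type*} [Fintype V] [DecidableEq V]
    (G : SimpleGraph V) [DecidableRel G.Adj]
    (d : Sym2 V → V → ℤ) (b : V → ℤ)
    (xhat : {e : Sym2 V // e ∈ G.edgeFinset} → ℝ)
    (hxhat : xhat ∈ Set.extremePoints ℝ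
      {x : {e : Sym2 V // e ∈ G.edgeFinset} → ℝ |
        (∀ e, 0 ≤ x e ∧ x e ≤ 1) ∧
        ∀ u : V, ∑ e : {e : Sym2 V // e ∈ G.edgeFinset},
          (if u ∈ e.1 then (d e.1 u : ℝ) * x e else 0) ≤ (b u : ℝ)})
    (y : {e : Sym2 V // e ∈ G.edgeFinset} → ℝ)
    (hsupp : ∀ e, xhat e = 0 ∨ xhat e = 1 → y e = 0)
    (hker : ∀ u : V,
      (∑ e : {e : Sym2 V // e ∈ G.edgeFinset},
        (if u ∈ e.1 then (d e.1 u : ℝ) * xhat e else 0)) = (b u : ℝ) →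
      (∑ e : {e : Sym2 V // e ∈ G.edgeFinset},
        (if u ∈ e.1 then (d e.1 u : ℝ) * y e else 0)) = 0) :
    y = 0 := by
  classical
  obtain ⟨⟨hbd, hvtx⟩, hext⟩ := hxhat
  set S : V → ℝ := fun u => ∑ e : {e : Sym2 V // e ∈ G.edgeFinset},
    (if u ∈ e.1 then (d e.1 u : ℝ) * xhat e else 0) with hS
  set T : V → ℝ := fun u => ∑ e : {e : Sym2 V // e ∈ G.edgeFinset},
    (if u ∈ e.1 then (d e.1 u : ℝ) * y e else 0) with hT
  obtain ⟨ε₁, hε₁pos, hε₁⟩ := exists_eps y xhat (fun e => (hbd e).1)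
    (fun e he => lt_of_le_of_ne (hbd e).1 (fun h => he (hsupp e (Or.inl h.symm))))
  obtain ⟨ε₂, hε₂pos, hε₂⟩ := exists_eps y (fun e => 1 - xhat e)
    (fun e => by show (0:ℝ) ≤ 1 - xhat e; linarith [(hbd e).2])
    (fun e he => by
      show (0:ℝ) < 1 - xhat e
      have h1 : xhat e ≠ 1 := fun h => he (hsupp e (Or.inr h))
      have := lt_of_le_of_ne (hbd e).2 h1
      linarith)
  obtain ⟨ε₃, hε₃pos, hε₃⟩ := exists_eps T (fun u => (b u : ℝ) - S u)
    (fun u => by show (0:ℝ) ≤ (b u : ℝ) - S u; linarith [hvtx u])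
    (fun u hu => by
      show (0:ℝ) < (b u : ℝ) - S u
      have h1 : S u ≠ (b u : ℝ) := fun h => hu (hker u h)
      have := lt_of_le_of_ne (hvtx u) h1
      linarith)
  set ε : ℝ := min ε₁ (min ε₂ ε₃) with hε
  have hεpos : 0 < ε := lt_min hε₁pos (lt_min hε₂pos hε₃pos)
  have habs₁ : ∀ e, ε * |y e| ≤ xhat e := fun e =>
    le_trans (mul_le_mul_of_nonneg_right (min_le_left _ _) (abs_nonneg _)) (hε₁ e)
  have habs₂ : ∀ e, ε * |y e| ≤ 1 - xhat e := fun e =>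
    le_trans (mul_le_mul_of_nonneg_right
      (le_trans (min_le_right _ _) (min_le_left _ _)) (abs_nonneg _)) (hε₂ e)
  have habs₃ : ∀ u, ε * |T u| ≤ (b u : ℝ) - S u := fun u =>
    le_trans (mul_le_mul_of_nonneg_right
      (le_trans (min_le_right _ _) (min_le_right _ _)) (abs_nonneg _)) (hε₃ u)
  set x₁ : {e : Sym2 V // e ∈ G.edgeFinset} → ℝ := fun e => xhat e + ε * y e with hx₁
  set x₂ : {e : Sym2 V // e ∈ G.edgeFinset} → ℝ := fun e => xhat e - ε * y e with hx₂
  have hay : ∀ e, |ε * y e| = ε * |y e| := fun e => by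
    rw [abs_mul, abs_of_pos hεpos]
  have habs : ∀ e : {e : Sym2 V // e ∈ G.edgeFinset},
      (-xhat e ≤ ε * y e ∧ ε * y e ≤ xhat e) ∧
      (-(1 - xhat e) ≤ ε * y e ∧ ε * y e ≤ 1 - xhat e) := by
    intro e
    exact ⟨abs_le.mp (le_of_eq_of_le (hay e) (habs₁ e)),
      abs_le.mp (le_of_eq_of_le (hay e) (habs₂ e))⟩
  have hsplit₁ : ∀ u : V,
      (∑ e : {e : Sym2 V // e ∈ G.edgeFinset},
        (if u ∈ e.1 then (d e.1 u : ℝ) * x₁ e else 0)) = S u + ε * T u := by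
    intro u
    rw [hS, hT, Finset.mul_sum, ← Finset.sum_add_distrib]
    refine Finset.sum_congr rfl fun e _ => ?_
    by_cases h : u ∈ e.1 <;> simp [hx₁, h] <;> ring
  have hsplit₂ : ∀ u : V,
      (∑ e : {e : Sym2 V // e ∈ G.edgeFinset},
        (if u ∈ e.1 then (d e.1 u : ℝ) * x₂ e else 0)) = S u - ε * T u := by
    intro u
    rw [hS, hT, Finset.mul_sum, ← Finset.sum_sub_distrib]
    refine Finset.sum_congr rfl fun e _ => ?_
    by_cases h : u ∈ e.1 <;> simp [hx₂, h] <;> ring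
  have hTabs : ∀ u, -((b u : ℝ) - S u) ≤ ε * T u ∧ ε * T u ≤ (b u : ℝ) - S u := by
    intro u
    have : |ε * T u| ≤ (b u : ℝ) - S u := le_of_eq_of_le
      (by rw [abs_mul, abs_of_pos hεpos]) (habs₃ u)
    exact abs_le.mp this
  have hmem₁ : x₁ ∈ {x : {e : Sym2 V // e ∈ G.edgeFinset} → ℝ |
      (∀ e, 0 ≤ x e ∧ x e ≤ 1) ∧
      ∀ u : V, ∑ e : {e : Sym2 V // e ∈ G.edgeFinset},
        (if u ∈ e.1 then (d e.1 u : ℝ) * x e else 0) ≤ (b u : ℝ)} := by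
    refine ⟨fun e => ⟨?_, ?_⟩, fun u => ?_⟩
    · have := (habs e).1.1; simp only [hx₁]; linarith
    · have := (habs e).2.2; simp only [hx₁]; linarith
    · rw [hsplit₁ u]; have := (hTabs u).2; linarith
  have hmem₂ : x₂ ∈ {x : {e : Sym2 V // e ∈ G.edgeFinset} → ℝ |
      (∀ e, 0 ≤ x e ∧ x e ≤ 1) ∧
      ∀ u : V, ∑ e : {e : Sym2 V // e ∈ G.edgeFinset},
        (if u ∈ e.1 then (d e.1 u : ℝ) * x e else 0) ≤ (b u : ℝ)} := by
    refine ⟨fun e => ⟨?_, ?_⟩, fun u => ?_⟩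
    · have := (habs e).1.2; have := (hbd e).1; simp only [hx₂]; linarith
    · have := (habs e).2.1; have := (hbd e).2; simp only [hx₂]; linarith
    · rw [hsplit₂ u]; have := (hTabs u).1; linarith
  have hseg : xhat ∈ openSegment ℝ x₁ x₂ := by
    refine ⟨1/2, 1/2, by norm_num, by norm_num, by norm_num, ?_⟩
    funext e
    simp only [Pi.add_apply, Pi.smul_apply, smul_eq_mul, hx₁, hx₂]
    ring
  have h1 := (hext hmem₁ hmem₂ hseg)
  funext e
  have he := congrFun h1 e
  simp only [hx₁] at he
  have : ε * y e = 0 := by linarith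
  have := (mul_eq_zero.mp this).resolve_left (ne_of_gt hεpos)
  simpa using this

/-- **Structure of extreme points of the natural 2-CS-PIP LP.** (i) The fractional
part of an extreme point induces connected components with at most as many edges as
vertices (i.e., at most one cycle); (ii) if the extreme point is entirely fractional,
then its support induces vertex-disjoint cycles (every covered vertex has degree 2). -/
theorem twoCSPIP_extreme_point_structure
    {V : Type*} [Fintype V] [DecidableEq V]
    (G : SimpleGraph V) [DecidableRel G.Adj]
    (d : Sym2 V → V → ℤ) (b : V → ℤ)
    (hd : ∀ e ∈ G.edgeFinset, ∀ u ∈ e, 1 ≤ d e u)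
    (hb : ∀ u : V, 1 ≤ b u)
    (hnoclip : ∀ e ∈ G.edgeFinset, ∀ u ∈ e, d e u ≤ b u)
    (xhat : {e : Sym2 V // e ∈ G.edgeFinset} → ℝ)
    (hxhat : xhat ∈ Set.extremePoints ℝ
      {x : {e : Sym2 V // e ∈ G.edgeFinset} → ℝ |
        (∀ e, 0 ≤ x e ∧ x e ≤ 1) ∧
        ∀ u : V, ∑ e : {e : Sym2 V // e ∈ G.edgeFinset},
          (if u ∈ e.1 then (d e.1 u : ℝ) * x e else 0) ≤ (b u : ℝ)}) :
    -- (i) each connected component of the graph of fractional edges has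
    --     at most |V(C)| edges
    (∀ c : (SimpleGraph.fromEdgeSet
        {e : Sym2 V | ∃ h : e ∈ G.edgeFinset, 0 < xhat ⟨e, h⟩ ∧ xhat ⟨e, h⟩ < 1}).ConnectedComponent,
      {e : Sym2 V | (∃ h : e ∈ G.edgeFinset, 0 < xhat ⟨e, h⟩ ∧ xhat ⟨e, h⟩ < 1) ∧
        ∀ v ∈ e, v ∈ c.supp}.ncard ≤ c.supp.ncard) ∧
    -- (ii) if every coordinate is strictly fractional, every vertex incident to an
    --      edge of G has degree exactly 2 in G
    ((∀ e : {e : Sym2 V // e ∈ G.edgeFinset}, 0 < xhat e ∧ xhat e < 1) →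
      ∀ v : V, (∃ e ∈ G.edgeFinset, v ∈ e) → G.degree v = 2) := by
  classical
  constructor
  · -- part (i)
    intro c
    set S : Set (Sym2 V) := {e : Sym2 V | (∃ h : e ∈ G.edgeFinset,
        0 < xhat ⟨e, h⟩ ∧ xhat ⟨e, h⟩ < 1) ∧ ∀ v ∈ e, v ∈ c.supp} with hSdef
    haveI : Fintype ↥S := Fintype.ofFinite _
    haveI : Fintype ↥c.supp := Fintype.ofFinite _
    set L : (↥S → ℝ) →ₗ[ℝ] (↥c.supp → ℝ) :=
      { toFun := fun y u => ∑ e : ↥S,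
          (if (u : V) ∈ (e : Sym2 V) then (d (e : Sym2 V) (u : V) : ℝ) * y e else 0)
        map_add' := by
          intro y z; funext u
          simp only [Pi.add_apply]
          rw [← Finset.sum_add_distrib]
          refine Finset.sum_congr rfl fun e _ => ?_
          by_cases h : (u : V) ∈ (e : Sym2 V) <;> simp [h] <;> ring
        map_smul' := by
          intro a y; funext u
          simp only [Pi.smul_apply, smul_eq_mul, RingHom.id_apply]
          rw [Finset.mul_sum]
          refine Finset.sum_congr rfl fun e _ => ?_
          by_cases h : (u : V) ∈ (e : Sym2 V) <;> simp [h] <;> ring } with hLdef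
    have hinj : Function.Injective L := by
      rw [← LinearMap.ker_eq_bot]
      rw [LinearMap.ker_eq_bot']
      intro y hy0
      set yhat : {e : Sym2 V // e ∈ G.edgeFinset} → ℝ :=
        fun e => if h : (e : Sym2 V) ∈ S then y ⟨e.1, h⟩ else 0 with hyhatdef
      have hyhat0 : yhat = 0 := by
        apply key_perturb G d b xhat hxhat
        · intro e he
          by_cases h : (e : Sym2 V) ∈ S
          · exfalso
            obtain ⟨h', hpos, hlt⟩ := h.1
            have heq : (⟨e.1, h'⟩ : {e : Sym2 V // e ∈ G.edgeFinset}) = e :=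
              Subtype.ext rfl
            rw [heq] at hpos hlt
            rcases he with h0 | h1 <;> linarith
          · simp [hyhatdef, h]
        · intro u _
          by_cases hu : u ∈ c.supp
          · have hLu := congrFun hy0 ⟨u, hu⟩
            simp only [Pi.zero_apply] at hLu
            set f : Sym2 V → ℝ := fun a =>
              if h : a ∈ S then (if u ∈ a then (d a u : ℝ) * y ⟨a, h⟩ else 0) else 0
              with hfdef
            have step1 : (∑ e : {e : Sym2 V // e ∈ G.edgeFinset},
                (if u ∈ e.1 then (d e.1 u : ℝ) * yhat e else 0)) =
                ∑ e : {e : Sym2 V // e ∈ G.edgeFinset}, f e.1 := by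
              refine Finset.sum_congr rfl fun e _ => ?_
              by_cases h : (e : Sym2 V) ∈ S
              · simp [hfdef, hyhatdef, h]
              · simp [hfdef, hyhatdef, h]
            have hsub : S.toFinset ⊆ G.edgeFinset := by
              intro a ha
              rw [Set.mem_toFinset] at ha
              exact ha.1.choose
            have step2 : (∑ a ∈ G.edgeFinset, f a) = ∑ a ∈ S.toFinset, f a := by
              refine (Finset.sum_subset hsub fun a _ ha => ?_).symm
              rw [Set.mem_toFinset] at ha
              simp [hfdef, ha]
            have step3 : (∑ a ∈ S.toFinset, f a) =
                ∑ e : ↥S, (if u ∈ (e : Sym2 V) then (d (e : Sym2 V) u : ℝ) * y e else 0) := by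
              rw [← Finset.sum_set_coe]
              refine Finset.sum_congr rfl fun e _ => ?_
              simp [hfdef, e.2]
            rw [step1, Finset.sum_coe_sort G.edgeFinset f, step2, step3]
            exact hLu
          · apply Finset.sum_eq_zero
            intro e _
            by_cases hue : u ∈ e.1
            · rw [if_pos hue]
              suffices h : yhat e = 0 by rw [h, mul_zero]
              by_cases h : (e : Sym2 V) ∈ S
              · exact absurd (h.2 u hue) hu
              · simp [hyhatdef, h]
            · rw [if_neg hue]
      funext s
      have hse : (s : Sym2 V) ∈ G.edgeFinset := s.2.1.choose
      have := congrFun hyhat0 ⟨s.1, hse⟩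
      simp only [Pi.zero_apply, hyhatdef] at this
      rw [dif_pos s.2] at this
      simpa using this
    have hcards := card_le_of_inj L hinj
    have h1 : S.ncard = Fintype.card ↥S := by
      rw [← Nat.card_coe_set_eq, Nat.card_eq_fintype_card]
    have h2 : c.supp.ncard = Fintype.card ↥c.supp := by
      rw [← Nat.card_coe_set_eq, Nat.card_eq_fintype_card]
    omega
  · -- part (ii)
    intro hall v hv
    set T : Finset V := Finset.univ.filter (fun u : V =>
      (∑ e : {e : Sym2 V // e ∈ G.edgeFinset},
        (if u ∈ e.1 then (d e.1 u : ℝ) * xhat e else 0)) = (b u : ℝ)) with hTdef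
    set L : ({e : Sym2 V // e ∈ G.edgeFinset} → ℝ) →ₗ[ℝ] (↥T → ℝ) :=
      { toFun := fun y u => ∑ e : {e : Sym2 V // e ∈ G.edgeFinset},
          (if (u : V) ∈ e.1 then (d e.1 (u : V) : ℝ) * y e else 0)
        map_add' := by
          intro y z; funext u
          simp only [Pi.add_apply]
          rw [← Finset.sum_add_distrib]
          refine Finset.sum_congr rfl fun e _ => ?_
          by_cases h : (u : V) ∈ e.1 <;> simp [h] <;> ring
        map_smul' := by
          intro a y; funext u
          simp only [Pi.smul_apply, smul_eq_mul, RingHom.id_apply]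
          rw [Finset.mul_sum]
          refine Finset.sum_congr rfl fun e _ => ?_
          by_cases h : (u : V) ∈ e.1 <;> simp [h] <;> ring } with hLdef
    have hinj : Function.Injective L := by
      rw [← LinearMap.ker_eq_bot, LinearMap.ker_eq_bot']
      intro y hy0
      apply key_perturb G d b xhat hxhat
      · intro e he
        rcases he with h0 | h1
        · linarith [(hall e).1]
        · linarith [(hall e).2]
      · intro u hu
        have hmem : u ∈ T := Finset.mem_filter.mpr ⟨Finset.mem_univ u, hu⟩
        have := congrFun hy0 ⟨u, hmem⟩
        simpa [hLdef] using this
    have hcards : G.edgeFinset.card ≤ T.card := by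
      have := card_le_of_inj L hinj
      rwa [Fintype.card_coe, Fintype.card_coe] at this
    -- tight vertices have degree ≥ 2
    have hdeg2 : ∀ u ∈ T, 2 ≤ G.degree u := by
      intro u hu
      by_contra hlt
      push_neg at hlt
      have htight := (Finset.mem_filter.mp hu).2
      set s : Finset {e : Sym2 V // e ∈ G.edgeFinset} :=
        Finset.univ.filter (fun e => u ∈ e.1) with hsdef
      have hsum : (∑ e : {e : Sym2 V // e ∈ G.edgeFinset},
          (if u ∈ e.1 then (d e.1 u : ℝ) * xhat e else 0)) =
          ∑ e ∈ s, (d e.1 u : ℝ) * xhat e := by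
        rw [hsdef, Finset.sum_filter]
      have hcard : s.card = G.degree u := by
        rw [← SimpleGraph.card_incidenceFinset_eq_degree,
          SimpleGraph.incidenceFinset_eq_filter]
        apply Finset.card_bij (fun (e : {e : Sym2 V // e ∈ G.edgeFinset}) _ => e.1)
        · intro e he
          rw [hsdef, Finset.mem_filter] at he
          exact Finset.mem_filter.mpr ⟨e.2, he.2⟩
        · intro e₁ _ e₂ _ h
          exact Subtype.ext h
        · intro a ha
          rw [Finset.mem_filter] at ha
          exact ⟨⟨a, ha.1⟩, by rw [hsdef]; simp [ha.2], rfl⟩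
      have hscard : s.card ≤ 1 := by omega
      have hblow : (1 : ℝ) ≤ (b u : ℝ) := by exact_mod_cast hb u
      interval_cases hc : s.card
      · have hse : s = ∅ := Finset.card_eq_zero.mp hc
        rw [hsum, hse] at htight
        simp at htight
        linarith
      · obtain ⟨a, hae⟩ := Finset.card_eq_one.mp hc
        have hamem : a ∈ s := hae ▸ Finset.mem_singleton_self a
        have hua : u ∈ a.1 := by
          rw [hsdef, Finset.mem_filter] at hamem
          exact hamem.2
        have hd1 : (1 : ℝ) ≤ (d a.1 u : ℝ) := by exact_mod_cast hd a.1 a.2 u hua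
        have hdb : (d a.1 u : ℝ) ≤ (b u : ℝ) := by exact_mod_cast hnoclip a.1 a.2 u hua
        have hxa := hall a
        rw [hsum, hae, Finset.sum_singleton] at htight
        nlinarith [hxa.1, hxa.2]
    -- counting
    have hhs := SimpleGraph.sum_degrees_eq_twice_card_edges G
    have hsum2 : ∑ u ∈ T, 2 ≤ ∑ u ∈ T, G.degree u := Finset.sum_le_sum hdeg2
    rw [Finset.sum_const, smul_eq_mul] at hsum2
    have hTle : ∑ u ∈ T, G.degree u ≤ ∑ u : V, G.degree u :=
      Finset.sum_le_sum_of_subset (Finset.subset_univ T)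
    have hchain1 : ∑ u ∈ T, G.degree u = ∑ u : V, G.degree u := by omega
    have hchain2 : ∑ u ∈ T, G.degree u = ∑ u ∈ T, 2 := by
      rw [Finset.sum_const, smul_eq_mul]; omega
    have hzero : ∀ w ∈ Finset.univ \ T, G.degree w = 0 := by
      have hsd : ∑ w ∈ Finset.univ \ T, G.degree w + ∑ w ∈ T, G.degree w
          = ∑ w : V, G.degree w := Finset.sum_sdiff (Finset.subset_univ T)
      have : ∑ w ∈ Finset.univ \ T, G.degree w = 0 := by omega
      exact (Finset.sum_eq_zero_iff).mp this
    have heq2 : ∀ u ∈ T, G.degree u = 2 := by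
      intro u hu
      exact ((Finset.sum_eq_sum_iff_of_le hdeg2).mp hchain2.symm u hu).symm
    -- v has an incident edge, so degree ≥ 1, so v ∈ T
    obtain ⟨e, he, hve⟩ := hv
    have hinc : e ∈ G.incidenceFinset v := by
      rw [SimpleGraph.incidenceFinset_eq_filter]
      exact Finset.mem_filter.mpr ⟨he, hve⟩
    have hdegpos : 0 < G.degree v := by
      rw [← SimpleGraph.card_incidenceFinset_eq_degree]
      exact Finset.card_pos.mpr ⟨e, hinc⟩
    have hvT : v ∈ T := by
      by_contra hvT
      have := hzero v (Finset.mem_sdiff.mpr ⟨Finset.mem_univ v, hvT⟩)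
      omega
    exact heq2 v hvT
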